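/- For any integer 1 ≤ d₀ ≤ n: (a) if 0 < y ≤ (n−d₀)T/d₀, then lim_{θ→∞} F(y;θ | D ≥ d₀) = 0; (b) if (n−d₀)T/d₀ < y ≤ nT/d₀, then lim_{θ→∞} F(y;θ | D ≥ d₀) = Σ_{ν=0}^{d₀−1} (−1)^ν (max{d₀y − (n−d₀+ν)T, 0})^{d₀} / (ν!(d₀−ν)! T^{d₀}). -/

import Mathlib

open Filter Set

/-- CDF of the gamma distribution with integer shape `d ≥ 1` and scale 1
(equal to 0 for x ≤ 0). -/
noncomputable def gammaCDF (x : ℝ) (d : ℕ) : ℝ :=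
  (∫ u in (0:ℝ)..(max x 0), u ^ (d - 1) * Real.exp (-u)) / (Nat.factorial (d - 1))

/-- P_θ(D ≥ d₀) where D ~ Binomial(n, 1 − e^{−T/θ}). -/
noncomputable def probDge (n d0 : ℕ) (T θ : ℝ) : ℝ :=
  ∑ j ∈ Finset.Icc d0 n,
    (n.choose j : ℝ) * (1 - Real.exp (-T / θ)) ^ j * Real.exp (-((n:ℝ) - j) * T / θ)

/-- The conditional CDF F(y;θ | D ≥ d₀) of the MLE of the exponential mean under
type-I censoring at time T with n items (Bartholomew's formula). -/
noncomputable def condCDF_MLE (n d0 : ℕ) (T y θ : ℝ) : ℝ :=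
  (∑ d ∈ Finset.Icc d0 n, ∑ ν ∈ Finset.range (d + 1),
      (-1:ℝ) ^ ν * (n.choose d) * (d.choose ν) * Real.exp (-(((n:ℝ) - d + ν)) * T / θ) *
        gammaCDF ((d * y - ((n:ℝ) - d + ν) * T) / θ) d) / probDge n d0 T θ

/-- The limiting function Σ_{ν=0}^{d₀−1} (−1)^ν (d₀y − (n−d₀+ν)T)₊^{d₀}/(ν!(d₀−ν)! T^{d₀}). -/
noncomputable def limitSum (n d0 : ℕ) (T y : ℝ) : ℝ :=
  ∑ ν ∈ Finset.range d0,
    (-1:ℝ) ^ ν * (max ((d0:ℝ) * y - ((n:ℝ) - d0 + ν) * T) 0) ^ d0 /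
      ((Nat.factorial ν) * (Nat.factorial (d0 - ν)) * T ^ d0)

lemma exp_div_tendsto (c : ℝ) : Tendsto (fun θ : ℝ => Real.exp (c / θ)) atTop (nhds 1) := by
  have h : Tendsto (fun θ : ℝ => c / θ) atTop (nhds 0) := tendsto_const_nhds.div_atTop tendsto_id
  simpa [Function.comp_def] using (Real.continuous_exp.tendsto 0).comp h

lemma one_sub_exp_tendsto (T : ℝ) : Tendsto (fun θ : ℝ => 1 - Real.exp (-T / θ)) atTop (nhds 0) := by
  have := (tendsto_const_nhds (x := (1:ℝ)) (f := atTop)).sub (exp_div_tendsto (-T))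
  simpa using this

lemma tendsto_theta_one_sub_exp (T : ℝ) (hT : 0 < T) :
    Tendsto (fun θ : ℝ => θ * (1 - Real.exp (-T / θ))) atTop (nhds T) := by
  have hderiv : HasDerivAt (fun x : ℝ => 1 - Real.exp (-x)) 1 0 := by
    have h := (Real.hasDerivAt_exp (-0)).comp 0 (hasDerivAt_neg 0)
    simpa using h.const_sub 1
  have hslope := hasDerivAt_iff_tendsto_slope.mp hderiv
  have hx : Tendsto (fun θ : ℝ => T / θ) atTop (nhdsWithin 0 {(0:ℝ)}ᶜ) := by
    apply tendsto_nhdsWithin_of_tendsto_nhds_of_eventually_within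
    · exact tendsto_const_nhds.div_atTop tendsto_id
    · filter_upwards [eventually_gt_atTop 0] with θ hθ
      exact (div_pos hT hθ).ne'
  have h2 := (hslope.comp hx).const_mul T
  rw [mul_one] at h2
  apply h2.congr'
  filter_upwards [eventually_gt_atTop 0] with θ hθ
  simp only [Function.comp_apply, slope_def_field, Real.exp_zero, neg_zero, sub_zero, sub_self,
    neg_div]
  field_simp

lemma integral_upper (d : ℕ) (hd : 1 ≤ d) (x : ℝ) (hx : 0 < x) :
    (∫ u in (0:ℝ)..x, u ^ (d-1) * Real.exp (-u)) ≤ x ^ d / d := by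
  have hpow : (∫ u in (0:ℝ)..x, u ^ (d-1)) = x ^ d / d := by
    rw [integral_pow, show d - 1 + 1 = d from by omega, Nat.cast_sub hd]
    push_cast
    rw [zero_pow (show d ≠ 0 by omega)]
    ring
  rw [← hpow]
  apply intervalIntegral.integral_mono_on hx.le
  · exact (Continuous.intervalIntegrable (by continuity) _ _)
  · exact (Continuous.intervalIntegrable (by continuity) _ _)
  · intro u hu
    have h1 : Real.exp (-u) ≤ 1 := by
      rw [show (1:ℝ) = Real.exp 0 from (Real.exp_zero).symm]
      exact Real.exp_le_exp.mpr (by linarith [hu.1])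
    calc u ^ (d-1) * Real.exp (-u) ≤ u ^ (d-1) * 1 :=
          mul_le_mul_of_nonneg_left h1 (pow_nonneg hu.1 _)
      _ = u ^ (d-1) := mul_one _

lemma integral_lower (d : ℕ) (hd : 1 ≤ d) (x : ℝ) (hx : 0 < x) :
    Real.exp (-x) * (x ^ d / d) ≤ (∫ u in (0:ℝ)..x, u ^ (d-1) * Real.exp (-u)) := by
  have hpow : (∫ u in (0:ℝ)..x, Real.exp (-x) * u ^ (d-1)) = Real.exp (-x) * (x ^ d / d) := by
    rw [intervalIntegral.integral_const_mul, integral_pow,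
      show d - 1 + 1 = d from by omega, Nat.cast_sub hd]
    push_cast
    rw [zero_pow (show d ≠ 0 by omega)]
    ring
  rw [← hpow]
  apply intervalIntegral.integral_mono_on hx.le
  · exact (Continuous.intervalIntegrable (by continuity) _ _)
  · exact (Continuous.intervalIntegrable (by continuity) _ _)
  · intro u hu
    calc Real.exp (-x) * u ^ (d-1) ≤ Real.exp (-u) * u ^ (d-1) :=
          mul_le_mul_of_nonneg_right (Real.exp_le_exp.mpr (by linarith [hu.2])) (pow_nonneg hu.1 _)
      _ = u ^ (d-1) * Real.exp (-u) := mul_comm _ _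

lemma tendsto_pow_mul_gammaCDF (a : ℝ) (d : ℕ) (hd : 1 ≤ d) :
    Tendsto (fun θ : ℝ => θ ^ d * gammaCDF (a / θ) d) atTop
      (nhds ((max a 0) ^ d / (Nat.factorial d))) := by
  have hfac : (Nat.factorial d : ℝ) = d * (Nat.factorial (d-1)) := by
    rw [← Nat.mul_factorial_pred (by omega)]
    push_cast
    ring
  rcases le_or_gt a 0 with ha | ha
  · have hmax : max a 0 = 0 := max_eq_right ha
    rw [hmax, zero_pow (by omega), zero_div]
    apply tendsto_const_nhds.congr'
    filter_upwards [eventually_gt_atTop 0] with θ hθ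
    have hm : max (a / θ) 0 = 0 := max_eq_right (div_nonpos_iff.mpr (Or.inr ⟨ha, hθ.le⟩))
    simp [gammaCDF, hm]
  · have hmax : max a 0 = a := max_eq_left ha.le
    rw [hmax]
    have hC : a ^ d / d / (Nat.factorial (d-1) : ℝ) = a ^ d / (Nat.factorial d) := by
      rw [hfac, div_div]
    have hfpos : (0:ℝ) < (Nat.factorial (d-1) : ℝ) := by positivity
    apply tendsto_of_tendsto_of_tendsto_of_le_of_le'
      (g := fun θ : ℝ => Real.exp (-a / θ) * (a ^ d / d) / (Nat.factorial (d-1)))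
      (h := fun _ : ℝ => a ^ d / d / (Nat.factorial (d-1)))
    · rw [← hC]
      have := ((exp_div_tendsto (-a)).mul (tendsto_const_nhds (x := a ^ d / (d:ℝ)))).div_const
        ((Nat.factorial (d-1) : ℝ))
      simpa using this
    · rw [← hC]; exact tendsto_const_nhds
    · filter_upwards [eventually_gt_atTop 0] with θ hθ
      have hx : 0 < a / θ := div_pos ha hθ
      have hm : max (a / θ) 0 = a / θ := max_eq_left hx.le
      have hlow := integral_lower d hd (a / θ) hx
      rw [gammaCDF, hm, show θ ^ d * ((∫ u in (0:ℝ)..(a/θ), u ^ (d-1) * Real.exp (-u)) / (Nat.factorial (d-1) : ℝ)) = (θ ^ d * ∫ u in (0:ℝ)..(a/θ), u ^ (d-1) * Real.exp (-u)) / (Nat.factorial (d-1) : ℝ) from (mul_div_assoc _ _ _).symm]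
      apply (div_le_div_iff_of_pos_right hfpos).mpr
      calc Real.exp (-a / θ) * (a ^ d / d)
          = θ ^ d * (Real.exp (-(a/θ)) * ((a/θ) ^ d / d)) := by
            rw [neg_div]
            field_simp
            rw [← mul_pow, mul_div_cancel₀ a hθ.ne']
        _ ≤ θ ^ d * (∫ u in (0:ℝ)..(a/θ), u ^ (d-1) * Real.exp (-u)) :=
            mul_le_mul_of_nonneg_left hlow (by positivity)
    · filter_upwards [eventually_gt_atTop 0] with θ hθ
      have hx : 0 < a / θ := div_pos ha hθ
      have hm : max (a / θ) 0 = a / θ := max_eq_left hx.le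
      have hup := integral_upper d hd (a / θ) hx
      rw [gammaCDF, hm, show θ ^ d * ((∫ u in (0:ℝ)..(a/θ), u ^ (d-1) * Real.exp (-u)) / (Nat.factorial (d-1) : ℝ)) = (θ ^ d * ∫ u in (0:ℝ)..(a/θ), u ^ (d-1) * Real.exp (-u)) / (Nat.factorial (d-1) : ℝ) from (mul_div_assoc _ _ _).symm]
      apply (div_le_div_iff_of_pos_right hfpos).mpr
      calc θ ^ d * (∫ u in (0:ℝ)..(a/θ), u ^ (d-1) * Real.exp (-u))
          ≤ θ ^ d * ((a/θ) ^ d / d) := mul_le_mul_of_nonneg_left hup (by positivity)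
        _ = a ^ d / d := by
            rw [div_pow]
            field_simp [hθ.ne']

lemma den_tendsto (n d0 : ℕ) (h1 : 1 ≤ d0) (h2 : d0 ≤ n) (T : ℝ) (hT : 0 < T) :
    Tendsto (fun θ : ℝ => θ ^ d0 * probDge n d0 T θ) atTop
      (nhds ((n.choose d0 : ℝ) * T ^ d0)) := by
  have heq : ∀ θ : ℝ, θ ^ d0 * probDge n d0 T θ =
      ∑ j ∈ Finset.Icc d0 n, (n.choose j : ℝ) *
        ((θ * (1 - Real.exp (-T/θ))) ^ d0 * (1 - Real.exp (-T/θ)) ^ (j - d0) *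
          Real.exp (-((n:ℝ) - j) * T / θ)) := by
    intro θ
    rw [probDge, Finset.mul_sum]
    refine Finset.sum_congr rfl fun j hj => ?_
    have hj' : d0 ≤ j := (Finset.mem_Icc.mp hj).1
    have hsplit : (1 - Real.exp (-T/θ)) ^ j
        = (1 - Real.exp (-T/θ)) ^ d0 * (1 - Real.exp (-T/θ)) ^ (j - d0) := by
      rw [← pow_add, Nat.add_sub_cancel' hj']
    rw [hsplit, mul_pow]
    ring
  simp only [heq]
  have hlim : ∀ j ∈ Finset.Icc d0 n,
      Tendsto (fun θ : ℝ => (n.choose j : ℝ) *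
        ((θ * (1 - Real.exp (-T/θ))) ^ d0 * (1 - Real.exp (-T/θ)) ^ (j - d0) *
          Real.exp (-((n:ℝ) - j) * T / θ))) atTop
        (nhds ((n.choose j : ℝ) * (T ^ d0 * (0:ℝ) ^ (j - d0) * 1))) := by
    intro j _
    exact tendsto_const_nhds.mul
      ((((tendsto_theta_one_sub_exp T hT).pow d0).mul ((one_sub_exp_tendsto T).pow (j - d0))).mul
        (exp_div_tendsto (-((n:ℝ) - j) * T)))
  have hsum := tendsto_finset_sum (Finset.Icc d0 n) hlim
  have hval : ∑ j ∈ Finset.Icc d0 n, (n.choose j : ℝ) * (T ^ d0 * (0:ℝ) ^ (j - d0) * 1)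
      = (n.choose d0 : ℝ) * T ^ d0 := by
    rw [Finset.sum_eq_single_of_mem d0 (Finset.mem_Icc.mpr ⟨le_refl _, h2⟩)]
    · simp
    · intro j hj hne
      have hj' : d0 ≤ j := (Finset.mem_Icc.mp hj).1
      rw [zero_pow (show j - d0 ≠ 0 by omega)]
      ring
  rwa [hval] at hsum

lemma num_tendsto (n d0 : ℕ) (h1 : 1 ≤ d0) (h2 : d0 ≤ n) (T : ℝ) (hT : 0 < T) (y : ℝ) :
    Tendsto (fun θ : ℝ => θ ^ d0 * ∑ d ∈ Finset.Icc d0 n, ∑ ν ∈ Finset.range (d + 1),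
      (-1:ℝ) ^ ν * (n.choose d) * (d.choose ν) * Real.exp (-(((n:ℝ) - d + ν)) * T / θ) *
        gammaCDF ((d * y - ((n:ℝ) - d + ν) * T) / θ) d) atTop
      (nhds (∑ ν ∈ Finset.range (d0 + 1),
        (-1:ℝ) ^ ν * (n.choose d0) * (d0.choose ν) *
          ((max ((d0:ℝ) * y - ((n:ℝ) - d0 + ν) * T) 0) ^ d0 / (Nat.factorial d0)))) := by
  have hlim : ∀ d ∈ Finset.Icc d0 n, ∀ ν ∈ Finset.range (d + 1),
      Tendsto (fun θ : ℝ => ((-1:ℝ) ^ ν * (n.choose d) * (d.choose ν)) *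
          Real.exp (-(((n:ℝ) - d + ν)) * T / θ) *
          (θ ^ d * gammaCDF ((d * y - ((n:ℝ) - d + ν) * T) / θ) d) *
          ((θ ^ (d - d0))⁻¹)) atTop
        (nhds (((-1:ℝ) ^ ν * (n.choose d) * (d.choose ν)) * 1 *
          ((max ((d:ℝ) * y - ((n:ℝ) - d + ν) * T) 0) ^ d / (Nat.factorial d)) *
          (if d = d0 then 1 else 0))) := by
    intro d hd ν _
    have hd' : d0 ≤ d := (Finset.mem_Icc.mp hd).1
    have hinv : Tendsto (fun θ : ℝ => (θ ^ (d - d0))⁻¹) atTop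
        (nhds (if d = d0 then 1 else 0)) := by
      rcases eq_or_ne d d0 with he | hne
      · subst he
        simp only [Nat.sub_self, pow_zero, inv_one, if_pos rfl]
        exact tendsto_const_nhds
      · rw [if_neg hne]
        exact tendsto_inv_atTop_zero.comp (tendsto_pow_atTop (show d - d0 ≠ 0 by omega))
    exact (((tendsto_const_nhds.mul (exp_div_tendsto (-(((n:ℝ) - d + ν)) * T))).mul
      (tendsto_pow_mul_gammaCDF _ d (le_trans h1 hd'))).mul hinv)
  have hsum := tendsto_finset_sum (Finset.Icc d0 n)
    (fun d hd => tendsto_finset_sum (Finset.range (d + 1)) (hlim d hd))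
  have heq : ∀ᶠ θ : ℝ in atTop,
      (∑ d ∈ Finset.Icc d0 n, ∑ ν ∈ Finset.range (d + 1),
        ((-1:ℝ) ^ ν * (n.choose d) * (d.choose ν)) *
          Real.exp (-(((n:ℝ) - d + ν)) * T / θ) *
          (θ ^ d * gammaCDF ((d * y - ((n:ℝ) - d + ν) * T) / θ) d) *
          ((θ ^ (d - d0))⁻¹))
      = θ ^ d0 * ∑ d ∈ Finset.Icc d0 n, ∑ ν ∈ Finset.range (d + 1),
        (-1:ℝ) ^ ν * (n.choose d) * (d.choose ν) * Real.exp (-(((n:ℝ) - d + ν)) * T / θ) *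
          gammaCDF ((d * y - ((n:ℝ) - d + ν) * T) / θ) d := by
    filter_upwards [eventually_gt_atTop 0] with θ hθ
    rw [Finset.mul_sum]
    refine Finset.sum_congr rfl fun d hd => ?_
    rw [Finset.mul_sum]
    refine Finset.sum_congr rfl fun ν _ => ?_
    have hd' : d0 ≤ d := (Finset.mem_Icc.mp hd).1
    have hpow : θ ^ d0 = θ ^ d * (θ ^ (d - d0))⁻¹ := by
      rw [← pow_sub₀ θ hθ.ne' (Nat.sub_le d d0)]
      congr 1
      omega
    rw [hpow]
    ring
  have hval : (∑ d ∈ Finset.Icc d0 n, ∑ ν ∈ Finset.range (d + 1),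
      ((-1:ℝ) ^ ν * (n.choose d) * (d.choose ν)) * 1 *
        ((max ((d:ℝ) * y - ((n:ℝ) - d + ν) * T) 0) ^ d / (Nat.factorial d)) *
        (if d = d0 then 1 else 0))
      = ∑ ν ∈ Finset.range (d0 + 1),
        (-1:ℝ) ^ ν * (n.choose d0) * (d0.choose ν) *
          ((max ((d0:ℝ) * y - ((n:ℝ) - d0 + ν) * T) 0) ^ d0 / (Nat.factorial d0)) := by
    rw [Finset.sum_eq_single_of_mem d0 (Finset.mem_Icc.mpr ⟨le_refl _, h2⟩)]
    · refine Finset.sum_congr rfl fun ν _ => ?_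
      rw [if_pos rfl]
      ring
    · intro d _ hne
      simp [hne]
  rw [← hval]
  exact hsum.congr' heq

lemma main_tendsto (n d0 : ℕ) (h1 : 1 ≤ d0) (h2 : d0 ≤ n) (T : ℝ) (hT : 0 < T)
    (y : ℝ) (hy : y ≤ (n:ℝ) * T / d0) :
    Tendsto (fun θ : ℝ => condCDF_MLE n d0 T y θ) atTop (nhds (limitSum n d0 T y)) := by
  have hd0pos : (0:ℝ) < (d0:ℝ) := by exact_mod_cast h1
  have hdenne : ((n.choose d0 : ℝ) * T ^ d0) ≠ 0 :=
    mul_ne_zero (Nat.cast_ne_zero.mpr (Nat.choose_pos h2).ne') (pow_ne_zero _ hT.ne')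
  have hdiv := (num_tendsto n d0 h1 h2 T hT y).div (den_tendsto n d0 h1 h2 T hT) hdenne
  have hval : (∑ ν ∈ Finset.range (d0 + 1),
        (-1:ℝ) ^ ν * (n.choose d0) * (d0.choose ν) *
          ((max ((d0:ℝ) * y - ((n:ℝ) - d0 + ν) * T) 0) ^ d0 / (Nat.factorial d0)))
      / ((n.choose d0 : ℝ) * T ^ d0) = limitSum n d0 T y := by
    have hlast : max ((d0:ℝ) * y - ((n:ℝ) - d0 + d0) * T) 0 = 0 := by
      apply max_eq_right
      have : (d0:ℝ) * y ≤ (n:ℝ) * T := by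
        rw [le_div_iff₀ hd0pos] at hy
        nlinarith
      have hn : ((n:ℝ) - d0 + d0) = (n:ℝ) := by ring
      rw [hn]
      linarith
    rw [Finset.sum_range_succ, hlast, zero_pow (show d0 ≠ 0 by omega), zero_div, mul_zero,
      add_zero, limitSum, Finset.sum_div]
    refine Finset.sum_congr rfl fun ν hν => ?_
    have hν' : ν ≤ d0 := le_of_lt (Finset.mem_range.mp hν)
    have hfact : ((d0.choose ν : ℝ)) * (Nat.factorial ν) * (Nat.factorial (d0 - ν))
        = (Nat.factorial d0) := by
      exact_mod_cast congrArg (Nat.cast (R := ℝ))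
        (Nat.choose_mul_factorial_mul_factorial hν')
    rw [show ((Nat.factorial d0 : ℝ)) = (d0.choose ν : ℝ) * (Nat.factorial ν) *
      (Nat.factorial (d0 - ν)) from hfact.symm]
    have hne1 : ((n.choose d0 : ℝ)) ≠ 0 := Nat.cast_ne_zero.mpr (Nat.choose_pos h2).ne'
    have hne2 : ((d0.choose ν : ℝ)) ≠ 0 := Nat.cast_ne_zero.mpr (Nat.choose_pos hν').ne'
    have hne3 : ((Nat.factorial ν : ℝ)) ≠ 0 := Nat.cast_ne_zero.mpr (Nat.factorial_ne_zero ν)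
    have hne4 : ((Nat.factorial (d0 - ν) : ℝ)) ≠ 0 :=
      Nat.cast_ne_zero.mpr (Nat.factorial_ne_zero _)
    have hne5 : (T:ℝ) ^ d0 ≠ 0 := pow_ne_zero _ hT.ne'
    field_simp
  rw [← hval]
  apply hdiv.congr'
  filter_upwards [eventually_gt_atTop 0] with θ hθ
  simp only [Pi.div_apply]
  rw [condCDF_MLE, mul_div_mul_left _ _ (pow_ne_zero d0 hθ.ne')]


/-- Theorem 2 (limits as θ → ∞): for 1 ≤ d₀ ≤ n, the limit of F(y;θ | D ≥ d₀) as
θ → ∞ is 0 if 0 < y ≤ (n−d₀)T/d₀ and equals the stated sum if (n−d₀)T/d₀ < y ≤ nT/d₀. -/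
theorem condCDF_MLE_limit_at_infty (n d0 : ℕ) (h1 : 1 ≤ d0) (h2 : d0 ≤ n)
    (T : ℝ) (hT : 0 < T) (y : ℝ) :
    (0 < y → y ≤ ((n:ℝ) - d0) * T / d0 →
      Tendsto (fun θ : ℝ => condCDF_MLE n d0 T y θ) atTop (nhds 0)) ∧
    (((n:ℝ) - d0) * T / d0 < y → y ≤ (n:ℝ) * T / d0 →
      Tendsto (fun θ : ℝ => condCDF_MLE n d0 T y θ) atTop (nhds (limitSum n d0 T y))) := by
  have hd0pos : (0:ℝ) < (d0:ℝ) := by exact_mod_cast h1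
  have hnd : (0:ℝ) ≤ (n:ℝ) - d0 := by
    have : (d0:ℝ) ≤ (n:ℝ) := by exact_mod_cast h2
    linarith
  constructor
  · intro hy0 hy
    have hy' : y ≤ (n:ℝ) * T / d0 := by
      apply le_trans hy
      gcongr
      linarith
    have hzero : limitSum n d0 T y = 0 := by
      rw [limitSum]
      apply Finset.sum_eq_zero
      intro ν hν
      have hmax : max ((d0:ℝ) * y - ((n:ℝ) - d0 + ν) * T) 0 = 0 := by
        apply max_eq_right
        have h1' : (d0:ℝ) * y ≤ ((n:ℝ) - d0) * T := by
          rw [le_div_iff₀ hd0pos] at hy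
          nlinarith
        have h2' : ((n:ℝ) - d0) * T ≤ ((n:ℝ) - d0 + ν) * T := by
          have : (0:ℝ) ≤ (ν:ℝ) := Nat.cast_nonneg ν
          nlinarith
        linarith
      rw [hmax, zero_pow (show d0 ≠ 0 by omega), mul_zero, zero_div]
    have := main_tendsto n d0 h1 h2 T hT y hy'
    rwa [hzero] at this
  · intro _ hy
    exact main_tendsto n d0 h1 h2 T hT y hy
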